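/- Every cycle in the glued binary tree GT(r) contains exactly two quasi-leaves, and hence every cycle can be written uniquely in the form C_{i,j}, the union of the two geodesic paths between quasi-leaves v_i and v_j. -/

import Mathlib

def MVSet {V : Type*} (G : SimpleGraph V) (S : Set V) : Prop :=
  ∀ x ∈ S, ∀ y ∈ S, ∃ p : G.Walk x y, p.IsPath ∧ p.length = G.dist x y ∧
    ∀ z ∈ p.support, z ≠ x → z ≠ y → z ∉ S

def MVColoring {V : Type*} {α : Type*} (G : SimpleGraph V) (f : V → α) : Prop :=
  ∀ a : α, MVSet G {v | f v = a}

noncomputable def chiMu {V : Type*} (G : SimpleGraph V) : ℕ :=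
  sInf {k : ℕ | ∃ f : V → Fin k, MVColoring G f}

/-- `a` is a child of `b` in the tree of finite sequences. -/
def IsChild {t : ℕ} (a b : List (Fin t)) : Prop := ∃ x : Fin t, a = b ++ [x]

/-- The vertex set of the glued `t`-ary tree `GT(r,t)`: vertices of the first
copy of the perfect `t`-ary tree of depth `r` (including the identified leaves,
the quasi-leaves), together with the internal vertices of the second copy. -/
def GTVert (r t : ℕ) : Type :=
  {l : List (Fin t) // l.length ≤ r} ⊕ {l : List (Fin t) // l.length < r}

/-- The glued `t`-ary tree `GT(r,t)`: two copies of the perfect `t`-ary tree of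
depth `r` with their leaves pairwise identified. -/
def GT (r t : ℕ) : SimpleGraph (GTVert r t) :=
  SimpleGraph.fromRel (fun u v =>
    match u, v with
    | .inl a, .inl b => IsChild a.1 b.1
    | .inr a, .inr b => IsChild a.1 b.1
    | .inl a, .inr b => a.1.length = r ∧ IsChild a.1 b.1
    | .inr _, .inl _ => False)

/-- Quasi-leaves of `GT(r,t)`: the identified leaves of the two copies. -/
def IsQuasiLeaf {r t : ℕ} (v : GTVert r t) : Prop :=
  match v with
  | .inl a => a.1.length = r
  | .inr _ => False

/-- Vertices in the first copy of the tree, not quasi-leaves. -/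
def InCopyOne {r t : ℕ} (v : GTVert r t) : Prop :=
  match v with
  | .inl a => a.1.length < r
  | .inr _ => False

/-- Vertices in the second copy of the tree, not quasi-leaves. -/
def InCopyTwo {r t : ℕ} (v : GTVert r t) : Prop :=
  match v with
  | .inl _ => False
  | .inr _ => True

/-- A geodesic: a path realizing the distance between its endpoints. -/
def IsGeodesic {V : Type*} (G : SimpleGraph V) {u v : V} (p : G.Walk u v) : Prop :=
  p.IsPath ∧ p.length = G.dist u v

namespace GTAux

variable {r t : ℕ}

instance : DecidableEq (GTVert r t) := by unfold GTVert; infer_instance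

def lst : GTVert r t → List (Fin t)
  | .inl a => a.1
  | .inr a => a.1

def sideB : GTVert r t → Bool
  | .inl _ => true
  | .inr _ => false

lemma lst_le (x : GTVert r t) : (lst x).length ≤ r := by
  cases x with
  | inl a => exact a.2
  | inr a => exact a.2.le

@[simp] lemma QL_inl (a : {l : List (Fin t) // l.length ≤ r}) :
    IsQuasiLeaf (Sum.inl a : GTVert r t) ↔ a.1.length = r := Iff.rfl

@[simp] lemma QL_inr (a : {l : List (Fin t) // l.length < r}) :
    ¬ IsQuasiLeaf (Sum.inr a : GTVert r t) := fun h => h.elim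

lemma QL_iff (x : GTVert r t) : IsQuasiLeaf x ↔ sideB x = true ∧ (lst x).length = r := by
  cases x <;> simp [IsQuasiLeaf, sideB, lst]

lemma not_QL_of_inr (a : {l : List (Fin t) // l.length < r}) :
    ¬ IsQuasiLeaf (Sum.inr a : GTVert r t) := by simp [IsQuasiLeaf]

lemma eq_of_lst_eq_side_eq {x y : GTVert r t} (h1 : lst x = lst y) (h2 : sideB x = sideB y) :
    x = y := by
  cases x <;> cases y <;> simp_all [lst, sideB] <;> exact congrArg _ (Subtype.ext h1)

def mir : GTVert r t → GTVert r t
  | .inl a => if h : a.1.length = r then .inl a else .inr ⟨a.1, lt_of_le_of_ne a.2 h⟩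
  | .inr b => .inl ⟨b.1, b.2.le⟩

@[simp] lemma lst_mir (x : GTVert r t) : lst (mir x) = lst x := by
  cases x with
  | inl a => by_cases h : a.1.length = r <;> simp [mir, h, lst]
  | inr b => simp [mir, lst]

@[simp] lemma mir_mir (x : GTVert r t) : mir (mir x) = x := by
  cases x with
  | inl a =>
    by_cases h : a.1.length = r
    · simp [mir, h]; rfl
    · simp [mir, h]; rfl
  | inr b =>
    have : b.1.length ≠ r := b.2.ne
    simp [mir, this]; rfl

lemma mir_inj : Function.Injective (mir : GTVert r t → GTVert r t) :=
  Function.LeftInverse.injective mir_mir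

@[simp] lemma QL_mir (x : GTVert r t) : IsQuasiLeaf (mir x) ↔ IsQuasiLeaf x := by
  cases x with
  | inl a =>
    by_cases h : a.1.length = r <;> simp [mir, h, IsQuasiLeaf]
  | inr b =>
    have : b.1.length ≠ r := b.2.ne
    simp [mir, IsQuasiLeaf, this]

lemma sideB_mir {x : GTVert r t} (h : ¬ IsQuasiLeaf x) : sideB (mir x) = !sideB x := by
  cases x with
  | inl a =>
    have : a.1.length ≠ r := by simpa [IsQuasiLeaf] using h
    simp [mir, this, sideB]
  | inr b => simp [mir, sideB]

lemma mir_eq_self {x : GTVert r t} (h : IsQuasiLeaf x) : mir x = x := by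
  cases x with
  | inl a => simp [mir, (QL_inl a).mp h]; rfl
  | inr b => exact absurd h (QL_inr b)

def Below (x y : GTVert r t) : Prop := ∃ a : Fin t, lst x = lst y ++ [a]

lemma below_len {x y : GTVert r t} (h : Below x y) :
    (lst x).length = (lst y).length + 1 := by
  obtain ⟨a, ha⟩ := h; simp [ha]

lemma below_dropLast {x y : GTVert r t} (h : Below x y) :
    lst y = (lst x).dropLast := by
  obtain ⟨a, ha⟩ := h; simp [ha]

lemma gt_adj {x y : GTVert r t} : (GT r t).Adj x y ↔ x ≠ y ∧
    ((match x, y with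
    | .inl a, .inl b => IsChild a.1 b.1
    | .inr a, .inr b => IsChild a.1 b.1
    | .inl a, .inr b => a.1.length = r ∧ IsChild a.1 b.1
    | .inr _, .inl _ => False) ∨
    (match y, x with
    | .inl a, .inl b => IsChild a.1 b.1
    | .inr a, .inr b => IsChild a.1 b.1
    | .inl a, .inr b => a.1.length = r ∧ IsChild a.1 b.1
    | .inr _, .inl _ => False)) := SimpleGraph.fromRel_adj _ x y

lemma adj_below {x y : GTVert r t} (h : (GT r t).Adj x y) : Below x y ∨ Below y x := by
  rw [gt_adj] at h
  obtain ⟨-, h | h⟩ := h <;> cases x <;> cases y <;>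
    first
      | exact Or.inl h
      | exact Or.inr h
      | exact Or.inl h.2
      | exact Or.inr h.2
      | exact h.elim

lemma child_len {a b : List (Fin t)} (h : IsChild a b) : a.length = b.length + 1 := by
  obtain ⟨x, hx⟩ := h; simp [hx]

lemma adj_len {x y : GTVert r t} (h : (GT r t).Adj x y) :
    (lst x).length = (lst y).length + 1 ∨ (lst y).length = (lst x).length + 1 := by
  rcases adj_below h with h' | h'
  · exact Or.inl (below_len h')
  · exact Or.inr (below_len h')

lemma adj_not_both_QL {x y : GTVert r t} (h : (GT r t).Adj x y) :
    ¬ (IsQuasiLeaf x ∧ IsQuasiLeaf y) := by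
  rintro ⟨hx, hy⟩
  rw [QL_iff] at hx hy
  rcases adj_len h with h' | h' <;> omega

lemma adj_same_side {x y : GTVert r t} (h : (GT r t).Adj x y)
    (hx : ¬ IsQuasiLeaf x) (hy : ¬ IsQuasiLeaf y) : sideB x = sideB y := by
  rw [gt_adj] at h
  obtain ⟨-, h | h⟩ := h <;> cases x <;> cases y <;> simp [sideB] at * <;> omega

lemma mir_adj {x y : GTVert r t} (h : (GT r t).Adj x y) : (GT r t).Adj (mir x) (mir y) := by
  rw [gt_adj] at h ⊢
  obtain ⟨hne, hrel⟩ := h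
  refine ⟨fun he => hne (mir_inj he), ?_⟩
  cases x with
  | inl a =>
    cases y with
    | inl b =>
      have hab : IsChild a.1 b.1 ∨ IsChild b.1 a.1 := hrel
      by_cases ha : a.1.length = r <;> by_cases hb : b.1.length = r
      · exfalso; rcases hab with h' | h' <;> (have := child_len h'; omega)
      · have hc : IsChild a.1 b.1 := by
          rcases hab with h' | h'
          · exact h'
          · exfalso; have := child_len h'; have := a.2; omega
        simp only [mir, ha, hb, eq_self_iff_true, ↓reduceDIte]
        exact Or.inl ⟨trivial, hc⟩
      · have hc : IsChild b.1 a.1 := by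
          rcases hab with h' | h'
          · exfalso; have := child_len h'; have := b.2; omega
          · exact h'
        simp only [mir, ha, hb, eq_self_iff_true, ↓reduceDIte]
        exact Or.inr ⟨trivial, hc⟩
      · simp only [mir, ha, hb, ↓reduceDIte]
        exact hab
    | inr b =>
      have hab : a.1.length = r ∧ IsChild a.1 b.1 := by
        rcases hrel with h' | h'
        · exact h'
        · exact h'.elim
      simp only [mir, hab.1, eq_self_iff_true, ↓reduceDIte]
      exact Or.inl hab.2
  | inr a =>
    cases y with
    | inl b =>
      have hab : b.1.length = r ∧ IsChild b.1 a.1 := by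
        rcases hrel with h' | h'
        · exact h'.elim
        · exact h'
      simp only [mir, hab.1, eq_self_iff_true, ↓reduceDIte]
      exact Or.inr hab.2
    | inr b =>
      have hab : IsChild a.1 b.1 ∨ IsChild b.1 a.1 := hrel
      simp only [mir]
      exact hab

def mirHom : GT r t →g GT r t := ⟨mir, fun h => mir_adj h⟩

def inlV (l : List (Fin t)) : GTVert r t :=
  Sum.inl ⟨l.take r, by simpa using Nat.min_le_left r l.length⟩

lemma lst_inlV {l : List (Fin t)} (h : l.length ≤ r) : lst (inlV l : GTVert r t) = l := by
  simp [inlV, lst, List.take_of_length_le h]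

lemma sideB_inlV (l : List (Fin t)) : sideB (inlV l : GTVert r t) = true := rfl

lemma eq_inlV {x : GTVert r t} (hx : sideB x = true) : x = inlV (lst x) :=
  eq_of_lst_eq_side_eq ((lst_inlV (lst_le x)).symm) (by simp [sideB_inlV, hx])

def mkE1 (p : List (Fin t)) : Sym2 (GTVert r t) := s(inlV p, inlV p.dropLast)

def mkE2 (p : List (Fin t)) : Sym2 (GTVert r t) := Sym2.map mir (mkE1 p)

lemma parity {V : Type*} {G : SimpleGraph V} (S : V → Bool) {x y : V} (w : G.Walk x y) :
    (w.darts.countP fun d => S d.toProd.1 != S d.toProd.2) % 2 =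
      (if S x = S y then 0 else 1) := by
  induction w with
  | nil => simp
  | @cons u v z h w ih =>
    rw [SimpleGraph.Walk.darts_cons, List.countP_cons]
    cases hu : S u <;> cases hv : S v <;> cases hz : S z <;> simp_all <;> omega

lemma countP_or_eq_add {α : Type*} (l : List α) (p q : α → Bool)
    (h : ∀ a ∈ l, ¬(p a = true ∧ q a = true)) :
    l.countP (fun a => p a || q a) = l.countP p + l.countP q := by
  induction l with
  | nil => simp
  | cons a l ih =>
    have h1 := h a List.mem_cons_self
    rw [List.countP_cons, List.countP_cons, List.countP_cons,
      ih (fun b hb => h b (List.mem_cons_of_mem a hb))]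
    cases hp : p a <;> cases hq : q a <;> simp_all <;> omega

lemma prefix_snoc {p q : List (Fin t)} {a : Fin t} (h1 : p <+: q ++ [a]) (h2 : ¬ p <+: q) :
    p = q ++ [a] := by
  rcases Nat.lt_or_ge q.length p.length with hl | hl
  · refine h1.eq_of_length ?_
    have := h1.length_le
    simp at this ⊢
    omega
  · exfalso
    have h3 := List.prefix_iff_eq_take.mp h1
    rw [List.take_append_of_le_length hl] at h3
    exact h2 (h3 ▸ List.take_prefix _ q)

lemma side_of_len_r {z : GTVert r t} (h : (lst z).length = r) : sideB z = true := by
  cases z with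
  | inl a => rfl
  | inr b => exact absurd h (by have := b.2; simp [lst]; omega)

lemma mir_fixed_iff {z : GTVert r t} : mir z = z ↔ IsQuasiLeaf z := by
  constructor
  · intro h
    by_contra hq
    have h2 := sideB_mir hq
    rw [h] at h2
    cases hs : sideB z <;> simp [hs] at h2
  · exact mir_eq_self

lemma vert_cases {z z' : GTVert r t} (h : lst z = lst z') : z = z' ∨ z = mir z' := by
  by_cases hs : sideB z = sideB z'
  · exact Or.inl (eq_of_lst_eq_side_eq h hs)
  · by_cases hq : IsQuasiLeaf z'
    · exfalso
      have h1 : (lst z').length = r := ((QL_iff z').mp hq).2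
      have h2 : sideB z = true := side_of_len_r (h ▸ h1)
      exact hs (h2.trans (((QL_iff z').mp hq).1).symm)
    · right
      refine eq_of_lst_eq_side_eq (by rw [lst_mir]; exact h) ?_
      rw [sideB_mir hq]
      cases h1 : sideB z <;> cases h2 : sideB z' <;> simp_all

lemma cross_edge_cases {p : List (Fin t)} {x y x' y' : GTVert r t}
    (hadj : (GT r t).Adj x y) (hxy : Below x y) (hp : lst x = p)
    (hadj' : (GT r t).Adj x' y') (hxy' : Below x' y')
    (hcross : decide (p <+: lst x') ≠ decide (p <+: lst y')) :
    s(x', y') = s(x, y) ∨ s(x', y') = s(mir x, mir y) := by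
  obtain ⟨a, ha⟩ := id hxy'
  have hyx' : lst y' <+: lst x' := ⟨[a], ha.symm⟩
  have hpx' : p <+: lst x' ∧ ¬ p <+: lst y' := by
    by_cases h1 : p <+: lst y'
    · exact absurd (by simp [h1.trans hyx', h1]) hcross
    · by_cases h2 : p <+: lst x'
      · exact ⟨h2, h1⟩
      · exact absurd (by simp [h1, h2]) hcross
  have hx'x : lst x' = lst x := by
    have h1 : p <+: lst y' ++ [a] := by rw [← ha]; exact hpx'.1
    rw [ha, ← prefix_snoc h1 hpx'.2, hp]
  have hy'y : lst y' = lst y := by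
    rw [below_dropLast hxy', hx'x, ← below_dropLast hxy]
  have hQLx : (lst x).length = r → mir x = x := fun h =>
    mir_eq_self ((QL_iff x).mpr ⟨side_of_len_r h, h⟩)
  have hnQLy : ¬ IsQuasiLeaf y := by
    rw [QL_iff]
    have h1 := below_len hxy
    have h2 := lst_le x
    rintro ⟨-, h3⟩
    omega
  rcases vert_cases hx'x with hcx | hcx <;> rcases vert_cases hy'y with hcy | hcy <;>
    rw [hcx, hcy] at hadj' ⊢
  · exact Or.inl rfl
  · by_cases hlr : (lst x).length = r
    · right; rw [hQLx hlr]
    · exfalso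
      have hnQLx : ¬ IsQuasiLeaf x := by rw [QL_iff]; rintro ⟨-, h2⟩; exact hlr h2
      have h1 := adj_same_side hadj hnQLx hnQLy
      have h2 := adj_same_side hadj' hnQLx (by rw [QL_mir]; exact hnQLy)
      rw [sideB_mir hnQLy, h1] at h2
      cases hb : sideB y <;> simp [hb] at h2
  · by_cases hlr : (lst x).length = r
    · left; rw [hQLx hlr]
    · exfalso
      have hnQLx : ¬ IsQuasiLeaf x := by rw [QL_iff]; rintro ⟨-, h2⟩; exact hlr h2
      have h1 := adj_same_side hadj hnQLx hnQLy
      have h2 := adj_same_side hadj' (by rw [QL_mir]; exact hnQLx) hnQLy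
      rw [sideB_mir hnQLx, ← h1] at h2
      cases hb : sideB x <;> simp [hb] at h2
  · exact Or.inr rfl

lemma edge_ne_mir_edge {x y : GTVert r t} (hadj : (GT r t).Adj x y) (hxy : Below x y) :
    s(x, y) ≠ s(mir x, mir y) := by
  intro hcon
  rw [Sym2.eq_iff] at hcon
  revert hcon
  rintro (⟨h1, h2⟩ | ⟨h1, h2⟩)
  · exact adj_not_both_QL hadj ⟨mir_fixed_iff.mp h1.symm, mir_fixed_iff.mp h2.symm⟩
  · have h3 : lst x = lst y := by rw [h1, lst_mir]
    have h4 := below_len hxy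
    rw [h3] at h4
    omega

lemma cross_dart_iff {p : List (Fin t)} {x y : GTVert r t}
    (hadj : (GT r t).Adj x y) (hxy : Below x y) (hp : lst x = p)
    (d : (GT r t).Dart) :
    (decide (p <+: lst d.toProd.1) != decide (p <+: lst d.toProd.2)) = true ↔
      (d.edge = s(x, y) ∨ d.edge = s(mir x, mir y)) := by
  have hedge : d.edge = s(d.toProd.1, d.toProd.2) := rfl
  have fact1 : p <+: lst x := hp ▸ List.prefix_refl _
  have fact2 : ¬ p <+: lst y := by
    intro hcon
    have h1 := hcon.length_le
    have h2 := below_len hxy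
    rw [hp] at h2
    omega
  constructor
  · intro h
    have hne : decide (p <+: lst d.toProd.1) ≠ decide (p <+: lst d.toProd.2) := by
      simpa using h
    rcases adj_below d.adj with hb | hb
    · exact hedge ▸ cross_edge_cases hadj hxy hp d.adj hb hne
    · have h2 := cross_edge_cases hadj hxy hp d.adj.symm hb hne.symm
      rw [hedge, Sym2.eq_swap]
      exact h2
  · intro h
    rcases h with h | h <;> rw [hedge, Sym2.eq_iff] at h <;>
      rcases h with ⟨h1, h2⟩ | ⟨h1, h2⟩ <;> rw [h1, h2] <;>
      simp [fact1, fact2, lst_mir]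

lemma countP_darts_edge {u v : GTVert r t} (w : (GT r t).Walk u v)
    (e : Sym2 (GTVert r t)) :
    (w.darts.countP fun d' => decide (d'.edge = e)) = w.edges.count e := by
  rw [List.count_eq_countP]
  have : w.edges = w.darts.map SimpleGraph.Dart.edge := rfl
  rw [this, List.countP_map]
  refine List.countP_congr ?_
  intro d _
  simp

lemma mem_edges_mir_of_oriented {x0 : GTVert r t} {c : (GT r t).Walk x0 x0}
    (hnd : c.edges.Nodup) {x y : GTVert r t}
    (hadj : (GT r t).Adj x y) (hxy : Below x y) (hf : s(x, y) ∈ c.edges) :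
    s(mir x, mir y) ∈ c.edges := by
  have hpar := parity (fun z => decide (lst x <+: lst z)) c
  rw [if_pos rfl] at hpar
  have hcong : (c.darts.countP fun d =>
      decide (lst x <+: lst d.toProd.1) != decide (lst x <+: lst d.toProd.2)) =
      c.darts.countP fun d => decide (d.edge = s(x, y)) || decide (d.edge = s(mir x, mir y)) := by
    refine List.countP_congr ?_
    intro d _
    rw [cross_dart_iff hadj hxy rfl d]
    simp
  rw [hcong, countP_or_eq_add _ _ _ ?excl] at hpar
  case excl =>
    intro d _
    rintro ⟨h1, h2⟩
    simp only [decide_eq_true_eq] at h1 h2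
    exact edge_ne_mir_edge hadj hxy (h1 ▸ h2)
  rw [countP_darts_edge, countP_darts_edge] at hpar
  have h1 : c.edges.count s(x, y) = 1 := List.count_eq_one_of_mem hnd hf
  have h2 : c.edges.count s(mir x, mir y) ≤ 1 := List.nodup_iff_count_le_one.mp hnd _
  rw [h1] at hpar
  have : 0 < c.edges.count s(mir x, mir y) := by omega
  exact List.count_pos_iff.mp this

lemma mem_edges_mir {x0 : GTVert r t} {c : (GT r t).Walk x0 x0}
    (hnd : c.edges.Nodup) {f : Sym2 (GTVert r t)} (hf : f ∈ c.edges) :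
    Sym2.map mir f ∈ c.edges := by
  have hf' : f ∈ (GT r t).edgeSet := c.edges_subset_edgeSet hf
  induction f with
  | _ x y =>
    have hadj : (GT r t).Adj x y := hf'
    rcases adj_below hadj with hb | hb
    · rw [Sym2.map_pair_eq]
      exact mem_edges_mir_of_oriented hnd hadj hb hf
    · rw [Sym2.map_pair_eq, Sym2.eq_swap]
      rw [Sym2.eq_swap] at hf
      exact mem_edges_mir_of_oriented hnd hadj.symm hb hf

lemma lst_inlV_dropLast {p : List (Fin t)} (h : p.length ≤ r) :
    lst (inlV p.dropLast : GTVert r t) = p.dropLast :=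
  lst_inlV (by rw [List.length_dropLast]; omega)

lemma adj_mkE1 {p : List (Fin t)} (h1 : 1 ≤ p.length) (h2 : p.length ≤ r) :
    (GT r t).Adj (inlV p) (inlV p.dropLast) ∧ Below (inlV p : GTVert r t) (inlV p.dropLast) ∧
      lst (inlV p : GTVert r t) = p := by
  have hne : p ≠ [] := by intro h; rw [h] at h1; simp at h1
  have hl1 : lst (inlV p : GTVert r t) = p := lst_inlV h2
  have hl2 : lst (inlV p.dropLast : GTVert r t) = p.dropLast := lst_inlV_dropLast h2
  have hbel : Below (inlV p : GTVert r t) (inlV p.dropLast) := by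
    refine ⟨p.getLast hne, ?_⟩
    rw [hl1, hl2]
    exact (List.dropLast_append_getLast hne).symm
  refine ⟨?_, hbel, hl1⟩
  rw [gt_adj]
  constructor
  · intro hcon
    have := congrArg (fun z => (lst z).length) hcon
    simp only [hl1, hl2, List.length_dropLast] at this
    omega
  · left
    show IsChild _ _
    obtain ⟨c, hc⟩ := hbel
    rw [hl1, hl2] at hc
    refine ⟨c, ?_⟩
    show p.take r = (p.dropLast).take r ++ [c]
    rw [List.take_of_length_le h2,
      List.take_of_length_le (by rw [List.length_dropLast]; omega : p.dropLast.length ≤ r)]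
    exact hc

lemma edge_shape_of_allinl {u v : GTVert r t} {A : (GT r t).Walk u v}
    (hA : A.IsPath) (hs : ∀ z ∈ A.support, sideB z = true)
    {f : Sym2 (GTVert r t)} (hf : f ∈ A.edges) :
    ∃ p : List (Fin t), f = mkE1 p ∧ 1 ≤ p.length ∧ p.length ≤ r ∧
      decide (p <+: lst u) ≠ decide (p <+: lst v) ∧ (p <+: lst u ∨ p <+: lst v) := by
  have hf' : f ∈ (GT r t).edgeSet := A.edges_subset_edgeSet hf
  -- orient the edge
  obtain ⟨x, y, hadj, hb, rfl⟩ : ∃ x y, (GT r t).Adj x y ∧ Below x y ∧ f = s(x, y) := by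
    induction f with
    | _ x y =>
      have hadj : (GT r t).Adj x y := hf'
      rcases adj_below hadj with hb | hb
      · exact ⟨x, y, hadj, hb, rfl⟩
      · exact ⟨y, x, hadj.symm, hb, Sym2.eq_swap⟩
  have hxs : x ∈ A.support := A.fst_mem_support_of_mem_edges hf
  have hys : y ∈ A.support := A.snd_mem_support_of_mem_edges hf
  have hlen1 : 1 ≤ (lst x).length := by have := below_len hb; omega
  have hlenr : (lst x).length ≤ r := lst_le x
  have hnQLy : ¬ IsQuasiLeaf y := by
    rw [QL_iff]
    have h1 := below_len hb
    rintro ⟨-, h3⟩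
    omega
  -- the mirrored edge is not an edge of A since mir y is on the wrong side
  have hmir_not : s(mir x, mir y) ∉ A.edges := by
    intro hcon
    have h1 : mir y ∈ A.support := A.snd_mem_support_of_mem_edges hcon
    have h2 := hs _ h1
    rw [sideB_mir hnQLy] at h2
    have h3 := hs _ hys
    rw [h3] at h2
    simp at h2
  -- parity
  have hpar := parity (fun z => decide (lst x <+: lst z)) A
  have hcong : (A.darts.countP fun d =>
      decide (lst x <+: lst d.toProd.1) != decide (lst x <+: lst d.toProd.2)) =
      A.darts.countP fun d => decide (d.edge = s(x, y)) || decide (d.edge = s(mir x, mir y)) := by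
    refine List.countP_congr ?_
    intro d _
    rw [cross_dart_iff hadj hb rfl d]
    simp
  rw [hcong, countP_or_eq_add _ _ _ ?excl] at hpar
  case excl =>
    intro d _
    rintro ⟨h1, h2⟩
    simp only [decide_eq_true_eq] at h1 h2
    exact edge_ne_mir_edge hadj hb (h1 ▸ h2)
  rw [countP_darts_edge, countP_darts_edge] at hpar
  have h1 : A.edges.count s(x, y) = 1 := List.count_eq_one_of_mem hA.edges_nodup hf
  have h2 : A.edges.count s(mir x, mir y) = 0 := by
    rw [List.count_eq_zero]
    exact hmir_not
  rw [h1, h2] at hpar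
  have hxor : decide (lst x <+: lst u) ≠ decide (lst x <+: lst v) := by
    intro hcon
    rw [if_pos hcon] at hpar
    omega
  refine ⟨lst x, ?_, hlen1, hlenr, hxor, ?_⟩
  · -- f = mkE1 (lst x)
    have hx' : x = inlV (lst x) := eq_inlV (hs _ hxs)
    have hy' : y = inlV ((lst x).dropLast) := by
      have : lst y = (lst x).dropLast := below_dropLast hb
      rw [← this]
      exact eq_inlV (hs _ hys)
    rw [mkE1, ← hx', ← hy']
  · -- lst x is a prefix of one of the ends
    by_cases hu : lst x <+: lst u
    · exact Or.inl hu
    · by_cases hv : lst x <+: lst v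
      · exact Or.inr hv
      · exact absurd (by simp [hu, hv]) hxor

lemma sideB_mkE2_snd {q : List (Fin t)} (h1 : 1 ≤ q.length) (h2 : q.length ≤ r) :
    sideB (mir (inlV q.dropLast : GTVert r t)) = false := by
  have hnq : ¬ IsQuasiLeaf (inlV q.dropLast : GTVert r t) := by
    rw [QL_iff, lst_inlV_dropLast h2]
    rintro ⟨-, hcon⟩
    rw [List.length_dropLast] at hcon
    omega
  rw [sideB_mir hnq, sideB_inlV]
  rfl

lemma mkE1_ne_mkE2 {p q : List (Fin t)} (hq1 : 1 ≤ q.length) (hq2 : q.length ≤ r) :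
    (mkE1 p : Sym2 (GTVert r t)) ≠ Sym2.map mir (mkE1 q) := by
  intro hcon
  rw [mkE1, mkE1, Sym2.map_pair_eq, Sym2.eq_iff] at hcon
  have hf := sideB_mkE2_snd (r := r) hq1 hq2
  rcases hcon with ⟨-, h2⟩ | ⟨h1, -⟩
  · have := congrArg sideB h2
    rw [sideB_inlV, hf] at this
    exact absurd this (by simp)
  · have := congrArg sideB h1
    rw [sideB_inlV, hf] at this
    exact absurd this (by simp)

lemma mkE1_inj {p q : List (Fin t)} (hp1 : 1 ≤ p.length) (hp2 : p.length ≤ r)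
    (hq1 : 1 ≤ q.length) (hq2 : q.length ≤ r)
    (h : (mkE1 p : Sym2 (GTVert r t)) = mkE1 q) : p = q := by
  rw [mkE1, mkE1, Sym2.eq_iff] at h
  rcases h with ⟨h1, -⟩ | ⟨h1, h2⟩
  · have := congrArg lst h1
    rwa [lst_inlV hp2, lst_inlV hq2] at this
  · have e1 := congrArg lst h1
    have e2 := congrArg lst h2
    rw [lst_inlV hp2, lst_inlV_dropLast hq2] at e1
    rw [lst_inlV_dropLast hp2, lst_inlV hq2] at e2
    have l1 := congrArg List.length e1
    have l2 := congrArg List.length e2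
    rw [List.length_dropLast] at l1 l2
    omega

lemma card_X_le_walk_length {u v : GTVert r t} (w : (GT r t).Walk u v) :
    (((((Finset.Icc 1 r).image fun i => (lst u).take i) ∪
      ((Finset.Icc 1 r).image fun i => (lst v).take i)).filter
      fun q => decide (q <+: lst u) ≠ decide (q <+: lst v)).card : ℕ) ≤ w.length := by
  set X := ((((Finset.Icc 1 r).image fun i => (lst u).take i) ∪
      ((Finset.Icc 1 r).image fun i => (lst v).take i)).filter
      fun q => decide (q <+: lst u) ≠ decide (q <+: lst v)) with hX
  have hmemX : ∀ p ∈ X, 1 ≤ p.length ∧ p.length ≤ r ∧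
      decide (p <+: lst u) ≠ decide (p <+: lst v) := by
    intro p hp
    rw [hX, Finset.mem_filter] at hp
    obtain ⟨hp1, hp2⟩ := hp
    refine ⟨?_, ?_, hp2⟩
    · rcases Nat.eq_zero_or_pos p.length with h0 | h0
      · exfalso
        have : p = [] := List.length_eq_zero_iff.mp h0
        rw [this] at hp2
        simp at hp2
      · exact h0
    · rw [Finset.mem_union] at hp1
      rcases hp1 with h | h <;>
      · rw [Finset.mem_image] at h
        obtain ⟨i, hi, rfl⟩ := h
        rw [Finset.mem_Icc] at hi
        calc (List.take i _).length ≤ i := by rw [List.length_take]; omega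
        _ ≤ r := hi.2
  have hFmem : ∀ p ∈ X, (if mkE1 p ∈ w.edges then (mkE1 p : Sym2 (GTVert r t))
      else Sym2.map mir (mkE1 p)) ∈ w.edges.toFinset := by
    intro p hp
    obtain ⟨hp1, hp2, hxor⟩ := hmemX p hp
    obtain ⟨hadj, hbel, hl⟩ := adj_mkE1 (r := r) hp1 hp2
    have hpar := parity (fun z => decide (p <+: lst z)) w
    rw [if_neg hxor] at hpar
    have hcong : (w.darts.countP fun d =>
        decide (p <+: lst d.toProd.1) != decide (p <+: lst d.toProd.2)) =
        w.darts.countP fun d => decide (d.edge = s(inlV p, inlV p.dropLast)) ||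
          decide (d.edge = s(mir (inlV p), mir (inlV p.dropLast))) := by
      refine List.countP_congr ?_
      intro d _
      rw [cross_dart_iff hadj hbel hl d]
      simp
    rw [hcong] at hpar
    have hpos : 0 < w.darts.countP fun d => decide (d.edge = s(inlV p, inlV p.dropLast)) ||
        decide (d.edge = s(mir (inlV p), mir (inlV p.dropLast))) := by omega
    rw [List.countP_pos_iff] at hpos
    obtain ⟨d, hd, hde⟩ := hpos
    have hdmem : d.edge ∈ w.edges := List.mem_map_of_mem hd
    rw [List.mem_toFinset]
    rcases Bool.or_eq_true_iff.mp hde with h | h <;> simp only [decide_eq_true_eq] at h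
    · rw [if_pos (by rw [mkE1, ← h]; exact hdmem)]
      rw [mkE1, ← h]
      exact hdmem
    · by_cases hin : mkE1 p ∈ w.edges
      · rw [if_pos hin]; exact hin
      · rw [if_neg hin, mkE1, Sym2.map_pair_eq, ← h]
        exact hdmem
  have hinj : Set.InjOn (fun p => if mkE1 p ∈ w.edges then (mkE1 p : Sym2 (GTVert r t))
      else Sym2.map mir (mkE1 p)) ↑X := by
    intro p hp q hq hpq
    obtain ⟨hp1, hp2, -⟩ := hmemX p hp
    obtain ⟨hq1, hq2, -⟩ := hmemX q hq
    simp only at hpq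
    by_cases h1 : mkE1 p ∈ w.edges <;> by_cases h2 : mkE1 q ∈ w.edges
    · rw [if_pos h1, if_pos h2] at hpq
      exact mkE1_inj hp1 hp2 hq1 hq2 hpq
    · rw [if_pos h1, if_neg h2] at hpq
      exact absurd hpq (mkE1_ne_mkE2 hq1 hq2)
    · rw [if_neg h1, if_pos h2] at hpq
      exact absurd hpq.symm (mkE1_ne_mkE2 hp1 hp2)
    · rw [if_neg h1, if_neg h2] at hpq
      exact mkE1_inj hp1 hp2 hq1 hq2 (Sym2.map.injective mir_inj hpq)
  calc X.card ≤ w.edges.toFinset.card := Finset.card_le_card_of_injOn _ hFmem hinj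
  _ ≤ w.edges.length := List.toFinset_card_le _
  _ = w.length := w.length_edges

lemma allinl_length_eq_dist {u v : GTVert r t} (A : (GT r t).Walk u v) (hA : A.IsPath)
    (hs : ∀ z ∈ A.support, sideB z = true) : A.length = (GT r t).dist u v := by
  set X := ((((Finset.Icc 1 r).image fun i => (lst u).take i) ∪
      ((Finset.Icc 1 r).image fun i => (lst v).take i)).filter
      fun q => decide (q <+: lst u) ≠ decide (q <+: lst v)) with hX
  have hsub : A.edges.toFinset ⊆ X.image mkE1 := by
    intro e he
    rw [List.mem_toFinset] at he
    obtain ⟨p, hfe, hp1, hp2, hxor, hpre⟩ := edge_shape_of_allinl hA hs he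
    rw [Finset.mem_image]
    refine ⟨p, ?_, hfe.symm⟩
    rw [hX, Finset.mem_filter, Finset.mem_union]
    refine ⟨?_, hxor⟩
    rcases hpre with h | h
    · left
      rw [Finset.mem_image]
      exact ⟨p.length, by rw [Finset.mem_Icc]; exact ⟨hp1, hp2⟩,
        (List.prefix_iff_eq_take.mp h).symm⟩
    · right
      rw [Finset.mem_image]
      exact ⟨p.length, by rw [Finset.mem_Icc]; exact ⟨hp1, hp2⟩,
        (List.prefix_iff_eq_take.mp h).symm⟩
  have hup : A.length ≤ X.card := by
    calc A.length = A.edges.length := A.length_edges.symm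
    _ = A.edges.toFinset.card := (List.toFinset_card_of_nodup hA.edges_nodup).symm
    _ ≤ (X.image mkE1).card := Finset.card_le_card hsub
    _ ≤ X.card := Finset.card_image_le
  have hlow : X.card ≤ (GT r t).dist u v := by
    obtain ⟨w0, hw0⟩ := SimpleGraph.Reachable.exists_walk_length_eq_dist ⟨A⟩
    rw [← hw0]
    exact card_X_le_walk_length w0
  have hd := SimpleGraph.dist_le A
  omega

lemma arc_extract {s0 t0 : GTVert r t} (w : (GT r t).Walk s0 t0) (b : Bool)
    (hs : sideB s0 = b) (hsQ : ¬ IsQuasiLeaf s0) (ht : IsQuasiLeaf t0) :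
    ∃ (v : GTVert r t) (w1 : (GT r t).Walk s0 v) (w2 : (GT r t).Walk v t0),
      IsQuasiLeaf v ∧ w = w1.append w2 ∧
      (∀ z ∈ w1.support, z ≠ v → sideB z = b ∧ ¬ IsQuasiLeaf z) := by
  induction w with
  | nil => exact absurd ht hsQ
  | @cons s0 s1 t0 hadj w' ih =>
    by_cases hq1 : IsQuasiLeaf s1
    · refine ⟨s1, SimpleGraph.Walk.cons hadj SimpleGraph.Walk.nil, w', hq1, rfl, ?_⟩
      intro z hz hzne
      simp only [SimpleGraph.Walk.support_cons, SimpleGraph.Walk.support_nil,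
        List.mem_cons, List.mem_singleton] at hz
      rcases hz with rfl | rfl | h
      · exact ⟨hs, hsQ⟩
      · exact absurd rfl hzne
      · exact absurd h List.not_mem_nil
    · have hside1 : sideB s1 = b := by
        rw [← hs]
        exact (adj_same_side hadj hsQ hq1).symm
      obtain ⟨v, w1, w2, hv, heq, hprop⟩ := ih hside1 hq1 ht
      refine ⟨v, SimpleGraph.Walk.cons hadj w1, w2, hv, by rw [SimpleGraph.Walk.cons_append, heq], ?_⟩
      intro z hz hzne
      rw [SimpleGraph.Walk.support_cons, List.mem_cons] at hz
      rcases hz with rfl | hz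
      · exact ⟨hs, hsQ⟩
      · exact hprop z hz hzne

open SimpleGraph in
lemma path_eq_of_edges_subset {V : Type*} {G : SimpleGraph V} :
    ∀ {u v : V} (Q : G.Walk u v) (W : G.Walk u v),
    W.IsPath → Q.IsPath → (∀ e ∈ W.edges, e ∈ Q.edges) → W = Q := by
  intro u v Q
  induction Q with
  | nil =>
    intro W hW _ hsub
    cases W with
    | nil => rfl
    | cons h W' =>
      exfalso
      rw [Walk.cons_isPath_iff] at hW
      exact hW.2 W'.end_mem_support
  | @cons u a v e Q' ih =>
    intro W hW hQ hsub
    have hQ' : Q'.IsPath ∧ u ∉ Q'.support := (Walk.cons_isPath_iff _ _).mp hQ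
    cases W with
    | nil =>
      exfalso
      exact hQ'.2 Q'.end_mem_support
    | @cons _ bb _ f W' =>
      have hfe : s(u, bb) ∈ (Walk.cons e Q').edges := hsub _ (by simp)
      rw [SimpleGraph.Walk.edges_cons, List.mem_cons] at hfe
      have hW' : W'.IsPath ∧ u ∉ W'.support := (Walk.cons_isPath_iff _ _).mp hW
      rcases hfe with hfe | hfe
      · have hba : bb = a := by
          rw [Sym2.eq_iff] at hfe
          rcases hfe with ⟨-, h2⟩ | ⟨h1, h2⟩
          · exact h2
          · exact absurd h2.symm (G.ne_of_adj f)
        subst hba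
        have hsub' : ∀ e' ∈ W'.edges, e' ∈ Q'.edges := by
          intro e' he'
          have h1 := hsub e' (by rw [SimpleGraph.Walk.edges_cons]; exact List.mem_cons_of_mem _ he')
          rw [SimpleGraph.Walk.edges_cons, List.mem_cons] at h1
          rcases h1 with h1 | h1
          · exfalso
            rw [h1] at he'
            exact hW'.2 (W'.fst_mem_support_of_mem_edges he')
          · exact h1
        rw [ih W' hW'.1 hQ'.1 hsub']
      · exfalso
        exact hQ'.2 (Q'.fst_mem_support_of_mem_edges hfe)

lemma side_const {a0 b0 : GTVert r t} (w : (GT r t).Walk a0 b0)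
    (hNoQL : ∀ z ∈ w.support, ¬ IsQuasiLeaf z) :
    ∀ z ∈ w.support, sideB z = sideB a0 := by
  induction w with
  | nil => intro z hz; rw [SimpleGraph.Walk.support_nil, List.mem_singleton] at hz; rw [hz]
  | @cons a0 a1 b0 hadj w' ih =>
    intro z hz
    rw [SimpleGraph.Walk.support_cons, List.mem_cons] at hz
    rcases hz with rfl | hz
    · rfl
    · have h1 : ∀ z ∈ w'.support, ¬ IsQuasiLeaf z := fun z hz =>
        hNoQL z (by rw [SimpleGraph.Walk.support_cons]; exact List.mem_cons_of_mem _ hz)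
      rw [ih h1 z hz]
      exact (adj_same_side hadj (hNoQL a0 (by simp)) (hNoQL a1 (by simp [SimpleGraph.Walk.support_cons, w'.start_mem_support]))).symm

lemma exists_QL_mem_support {x0 : GTVert r t} (c : (GT r t).Walk x0 x0) (hc : c.IsCycle) :
    ∃ u ∈ c.support, IsQuasiLeaf u := by
  by_contra hcon
  push_neg at hcon
  have hnd : c.edges.Nodup := hc.edges_nodup
  have hlen : 0 < c.edges.length := by
    rw [c.length_edges]
    have := hc.three_le_length
    omega
  obtain ⟨f, hf⟩ : ∃ f, f ∈ c.edges := List.exists_mem_of_length_pos hlen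
  have hmirf := mem_edges_mir hnd hf
  induction f with
  | _ x y =>
    have hx : x ∈ c.support := c.fst_mem_support_of_mem_edges hf
    rw [Sym2.map_pair_eq] at hmirf
    have hmx : mir x ∈ c.support := c.fst_mem_support_of_mem_edges hmirf
    have h1 := side_const c (fun z hz => hcon z hz) x hx
    have h2 := side_const c (fun z hz => hcon z hz) (mir x) hmx
    rw [sideB_mir (hcon x hx)] at h2
    rw [h1] at h2
    cases hs : sideB x0 <;> rw [hs] at h2 <;> simp at h2

lemma mem_support_tail_of_closed {V : Type*} {G : SimpleGraph V} {a : V}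
    (w : G.Walk a a) (hw : ¬ w.Nil) {z : V} :
    z ∈ w.support ↔ z ∈ w.support.tail := by
  obtain ⟨b2, hadj, w', rfl⟩ := (SimpleGraph.Walk.not_nil_iff).mp hw
  rw [SimpleGraph.Walk.support_cons]
  simp only [List.tail_cons, List.mem_cons]
  constructor
  · rintro (rfl | h)
    · exact w'.end_mem_support
    · exact h
  · exact Or.inr

lemma inCopyOne_of {z : GTVert r t} (h1 : sideB z = true) (h2 : ¬ IsQuasiLeaf z) :
    InCopyOne z := by
  cases z with
  | inl a => exact lt_of_le_of_ne a.2 (by simpa using h2)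
  | inr a => simp [sideB] at h1

lemma inCopyTwo_of {z : GTVert r t} (h1 : sideB z = false) : InCopyTwo z := by
  cases z with
  | inl a => simp [sideB] at h1
  | inr a => trivial

lemma sideB_of_QL {z : GTVert r t} (h : IsQuasiLeaf z) : sideB z = true :=
  ((QL_iff z).mp h).1

end GTAux

open GTAux

/-- Every cycle in the glued binary tree `GT(r)` contains exactly two
quasi-leaves, and its vertex set is the union of the vertex sets of the two
geodesics joining these two quasi-leaves. -/
theorem GT_cycle_two_quasiLeaves (r : ℕ) (hr : 1 ≤ r)
    (x : GTVert r 2) (c : (GT r 2).Walk x x) (hc : c.IsCycle) :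
    {z | z ∈ c.support ∧ IsQuasiLeaf z}.ncard = 2 ∧
    ∃ u v : GTVert r 2, u ≠ v ∧ IsQuasiLeaf u ∧ IsQuasiLeaf v ∧
      u ∈ c.support ∧ v ∈ c.support ∧
      ∃ p q : (GT r 2).Walk u v, IsGeodesic (GT r 2) p ∧ IsGeodesic (GT r 2) q ∧
        (∀ z ∈ p.support, z ≠ u → z ≠ v → InCopyOne z) ∧
        (∀ z ∈ q.support, z ≠ u → z ≠ v → InCopyTwo z) ∧
        {z | z ∈ c.support} = {z | z ∈ p.support} ∪ {z | z ∈ q.support} := by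
  classical
  obtain ⟨u, hu_mem, hu_QL⟩ := exists_QL_mem_support c hc
  have hc₁ : (c.rotate u hu_mem).IsCycle := hc.rotate hu_mem
  set c₁ := c.rotate u hu_mem with hc₁def
  have hsup_c₁ : ∀ z, z ∈ c₁.support ↔ z ∈ c.support := by
    intro z
    rw [mem_support_tail_of_closed c₁ hc₁.not_nil, mem_support_tail_of_closed c hc.not_nil]
    exact (c.support_rotate u hu_mem).mem_iff
  have hnd₁ : c₁.edges.Nodup := hc₁.edges_nodup
  obtain ⟨s', hadj1, tail, hc₁eq⟩ := (SimpleGraph.Walk.not_nil_iff).mp hc₁.not_nil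
  have htail := (SimpleGraph.Walk.cons_isCycle_iff tail hadj1).mp (hc₁eq ▸ hc₁)
  have hQs' : ¬ IsQuasiLeaf s' := fun h => adj_not_both_QL hadj1 ⟨hu_QL, h⟩
  obtain ⟨v, w1, w2, hvQL, heq, hside⟩ := arc_extract tail (sideB s') rfl hQs' hu_QL
  have hw1path : w1.IsPath := (heq ▸ htail.1).of_append_left
  have hw2path : w2.IsPath := (heq ▸ htail.1).of_append_right
  have hs'nv : s' ≠ v := fun h => hQs' (h ▸ hvQL)
  set A := SimpleGraph.Walk.cons hadj1 w1 with hAdef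
  have hc₁A : c₁ = A.append w2 := by rw [hc₁eq, heq]; rfl
  have hAe_sub : ∀ e ∈ A.edges, e ∈ c₁.edges := by
    intro e he
    rw [hc₁A, SimpleGraph.Walk.edges_append]
    exact List.mem_append_left _ he
  have hAP : ∀ g ∈ A.edges, ∃ z0, z0 ∈ g ∧ sideB z0 = sideB s' ∧ ¬ IsQuasiLeaf z0 := by
    intro g hg
    rw [hAdef, SimpleGraph.Walk.edges_cons, List.mem_cons] at hg
    rcases hg with rfl | hg
    · exact ⟨s', by rw [Sym2.mem_iff]; right; rfl, rfl, hQs'⟩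
    · have hg' : g ∈ (GT r 2).edgeSet := w1.edges_subset_edgeSet hg
      induction g with
      | _ z1 z2 =>
        have h1 : z1 ∈ w1.support := w1.fst_mem_support_of_mem_edges hg
        have h2 : z2 ∈ w1.support := w1.snd_mem_support_of_mem_edges hg
        have hne : z1 ≠ z2 := (GT r 2).ne_of_adj hg'
        by_cases hz1 : z1 = v
        · have hh2 := hside z2 h2 (fun hh => hne (by rw [hz1, hh]))
          exact ⟨z2, by rw [Sym2.mem_iff]; right; rfl, hh2.1, hh2.2⟩
        · exact ⟨z1, by rw [Sym2.mem_iff]; left; rfl, (hside z1 h1 hz1).1,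
            (hside z1 h1 hz1).2⟩
  have hvu : v ≠ u := by
    intro hveq
    by_cases hnil : w2.Nil
    · have hl0 : w2.length = 0 := (SimpleGraph.Walk.nil_iff_length_eq).mp hnil
      have hw2e : w2.edges = [] := List.eq_nil_of_length_eq_zero
        (by rw [w2.length_edges]; exact hl0)
      have hfirst : s(u, s') ∈ c₁.edges := by
        rw [hc₁eq, SimpleGraph.Walk.edges_cons]
        exact List.mem_cons_self
      have hmirf := mem_edges_mir hnd₁ hfirst
      rw [Sym2.map_pair_eq, mir_eq_self hu_QL] at hmirf
      have hmem : s(u, mir s') ∈ A.edges := by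
        have h2 : c₁.edges = A.edges := by
          rw [hc₁A, SimpleGraph.Walk.edges_append, hw2e, List.append_nil]
        rw [← h2]
        exact hmirf
      obtain ⟨z0, hz0mem, hz0side, hz0QL⟩ := hAP _ hmem
      rw [Sym2.mem_iff] at hz0mem
      rcases hz0mem with rfl | rfl
      · exact hz0QL hu_QL
      · rw [sideB_mir hQs'] at hz0side
        cases hsb : sideB s' <;> rw [hsb] at hz0side <;> simp at hz0side
    · obtain ⟨s2, hadj2, w2', hw2eq⟩ := (SimpleGraph.Walk.not_nil_iff).mp hnil
      have h1 : u ∈ w1.support := hveq ▸ w1.end_mem_support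
      have h2 : u ∈ w2.support.tail := by
        rw [hw2eq, SimpleGraph.Walk.support_cons]
        simpa using w2'.end_mem_support
      have h3 := htail.1.support_nodup
      rw [heq, SimpleGraph.Walk.support_append, List.nodup_append] at h3
      exact h3.2.2 u h1 u h2 rfl
  have hu_nw1 : u ∉ w1.support := by
    intro h1
    have h2 : u ∈ w2.support.tail := by
      have h4 := w2.end_mem_support
      rw [SimpleGraph.Walk.support_eq_cons] at h4
      rcases List.mem_cons.mp h4 with h5 | h5
      · exact absurd h5.symm hvu
      · exact h5
    have h3 := htail.1.support_nodup
    rw [heq, SimpleGraph.Walk.support_append, List.nodup_append] at h3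
    exact h3.2.2 u h1 u h2 rfl
  have hApath : A.IsPath := by
    rw [hAdef, SimpleGraph.Walk.cons_isPath_iff]
    exact ⟨hw1path, hu_nw1⟩
  have hmu : mir u = u := mir_eq_self hu_QL
  have hmv : mir v = v := mir_eq_self hvQL
  set q0 := (A.map mirHom).copy hmu hmv with hq0def
  have hq0path : q0.IsPath := by
    rw [hq0def]; erw [SimpleGraph.Walk.isPath_copy]
    exact SimpleGraph.Walk.map_isPath_of_injective mir_inj hApath
  have hq0edges : q0.edges = A.edges.map (Sym2.map mir) := by
    rw [hq0def]; erw [SimpleGraph.Walk.edges_copy, SimpleGraph.Walk.edges_map]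
    rfl
  have hq0support : q0.support = A.support.map mir := by
    rw [hq0def]; erw [SimpleGraph.Walk.support_copy, SimpleGraph.Walk.support_map]
    rfl
  have hq0len : q0.length = A.length := by
    rw [hq0def]; erw [SimpleGraph.Walk.length_copy, SimpleGraph.Walk.length_map]
  have hQP : ∀ g ∈ q0.edges, ∃ z0, z0 ∈ g ∧ sideB z0 = !(sideB s') ∧ ¬ IsQuasiLeaf z0 := by
    intro g hg
    rw [hq0edges, List.mem_map] at hg
    obtain ⟨g', hg', rfl⟩ := hg
    obtain ⟨z0, hz0, hs0, hq0'⟩ := hAP g' hg'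
    exact ⟨mir z0, Sym2.mem_map.mpr ⟨z0, hz0, rfl⟩,
      by rw [sideB_mir hq0', hs0], by rw [QL_mir]; exact hq0'⟩
  have hdisj : ∀ g ∈ q0.edges, g ∉ A.edges := by
    intro g hgq hgA
    obtain ⟨z1, hz1, hs1, hq1⟩ := hQP g hgq
    obtain ⟨z2, hz2, hs2, hq2⟩ := hAP g hgA
    have hne : z1 ≠ z2 := by
      intro h
      rw [h, hs2] at hs1
      cases hsb : sideB s' <;> rw [hsb] at hs1 <;> simp at hs1
    have hgeq : g = s(z1, z2) := (Sym2.mem_and_mem_iff hne).mp ⟨hz1, hz2⟩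
    have hadj' : (GT r 2).Adj z1 z2 := by
      rw [← SimpleGraph.mem_edgeSet, ← hgeq]
      exact A.edges_subset_edgeSet hgA
    have hss := adj_same_side hadj' hq1 hq2
    rw [hs1, hs2] at hss
    cases hsb : sideB s' <;> rw [hsb] at hss <;> simp at hss
  have hq0_sub : ∀ e ∈ q0.edges, e ∈ w2.edges := by
    intro e he
    have h1 : e ∈ c₁.edges := by
      rw [hq0edges, List.mem_map] at he
      obtain ⟨g', hg', rfl⟩ := he
      exact mem_edges_mir hnd₁ (hAe_sub g' hg')
    rw [hc₁A, SimpleGraph.Walk.edges_append, List.mem_append] at h1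
    rcases h1 with h1 | h1
    · exact absurd h1 (hdisj e he)
    · exact h1
  have hw2q0 : q0.reverse = w2 :=
    path_eq_of_edges_subset w2 q0.reverse hq0path.reverse hw2path
      (by intro e he; rw [SimpleGraph.Walk.edges_reverse, List.mem_reverse] at he
          exact hq0_sub e he)
  have hsupp_iff : ∀ z, z ∈ c₁.support ↔ (z ∈ A.support ∨ z ∈ q0.support) := by
    intro z
    rw [hc₁A, SimpleGraph.Walk.mem_support_append_iff, ← hw2q0,
      SimpleGraph.Walk.support_reverse, List.mem_reverse]
  have hA_internal : ∀ z ∈ A.support, z ≠ u → z ≠ v →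
      sideB z = sideB s' ∧ ¬ IsQuasiLeaf z := by
    intro z hz hzu hzv
    rw [hAdef, SimpleGraph.Walk.support_cons, List.mem_cons] at hz
    rcases hz with rfl | hz
    · exact absurd rfl hzu
    · exact hside z hz hzv
  have hq0_internal : ∀ z ∈ q0.support, z ≠ u → z ≠ v →
      sideB z = !(sideB s') ∧ ¬ IsQuasiLeaf z := by
    intro z hz hzu hzv
    rw [hq0support, List.mem_map] at hz
    obtain ⟨z', hz', rfl⟩ := hz
    have hz'u : z' ≠ u := fun h => hzu (by rw [h, hmu])
    have hz'v : z' ≠ v := fun h => hzv (by rw [h, hmv])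
    obtain ⟨h1, h2⟩ := hA_internal z' hz' hz'u hz'v
    exact ⟨by rw [sideB_mir h2, h1], by rw [QL_mir]; exact h2⟩
  have hvA : v ∈ A.support := A.end_mem_support
  have hv_mem : v ∈ c.support := (hsup_c₁ v).mp ((hsupp_iff v).mpr (Or.inl hvA))
  have hQLset : {z | z ∈ c.support ∧ IsQuasiLeaf z} = {u, v} := by
    ext z
    simp only [Set.mem_setOf_eq, Set.mem_insert_iff, Set.mem_singleton_iff]
    constructor
    · rintro ⟨hzc, hzQ⟩
      by_contra hcon
      push_neg at hcon
      have hz₁ : z ∈ c₁.support := (hsup_c₁ z).mpr hzc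
      rcases (hsupp_iff z).mp hz₁ with h | h
      · exact (hA_internal z h hcon.1 hcon.2).2 hzQ
      · exact (hq0_internal z h hcon.1 hcon.2).2 hzQ
    · rintro (rfl | rfl)
      · exact ⟨hu_mem, hu_QL⟩
      · exact ⟨hv_mem, hvQL⟩
  have hsupp_union : ∀ z, z ∈ c.support ↔ (z ∈ A.support ∨ z ∈ q0.support) := by
    intro z
    rw [← hsup_c₁ z]
    exact hsupp_iff z
  refine ⟨by rw [hQLset]; exact Set.ncard_pair (Ne.symm hvu), u, v, Ne.symm hvu,
    hu_QL, hvQL, hu_mem, hv_mem, ?_⟩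
  cases hsb : sideB s' with
  | false =>
    have hall : ∀ z ∈ q0.support, sideB z = true := by
      intro z hz
      by_cases hzu : z = u
      · rw [hzu]; exact sideB_of_QL hu_QL
      by_cases hzv : z = v
      · rw [hzv]; exact sideB_of_QL hvQL
      have := (hq0_internal z hz hzu hzv).1
      rw [hsb] at this
      simpa using this
    have hgeo : q0.length = (GT r 2).dist u v := allinl_length_eq_dist q0 hq0path hall
    refine ⟨q0, A, ⟨hq0path, hgeo⟩, ⟨hApath, by rw [← hq0len]; exact hgeo⟩, ?_, ?_, ?_⟩
    · intro z hz hzu hzv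
      obtain ⟨h1, h2⟩ := hq0_internal z hz hzu hzv
      rw [hsb] at h1
      exact inCopyOne_of (by simpa using h1) h2
    · intro z hz hzu hzv
      obtain ⟨h1, h2⟩ := hA_internal z hz hzu hzv
      rw [hsb] at h1
      exact inCopyTwo_of h1
    · ext z
      simp only [Set.mem_setOf_eq, Set.mem_union]
      rw [hsupp_union z]
      exact or_comm
  | true =>
    have hall : ∀ z ∈ A.support, sideB z = true := by
      intro z hz
      by_cases hzu : z = u
      · rw [hzu]; exact sideB_of_QL hu_QL
      by_cases hzv : z = v
      · rw [hzv]; exact sideB_of_QL hvQL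
      have := (hA_internal z hz hzu hzv).1
      rw [hsb] at this
      exact this
    have hgeo : A.length = (GT r 2).dist u v := allinl_length_eq_dist A hApath hall
    refine ⟨A, q0, ⟨hApath, hgeo⟩, ⟨hq0path, by rw [hq0len]; exact hgeo⟩, ?_, ?_, ?_⟩
    · intro z hz hzu hzv
      obtain ⟨h1, h2⟩ := hA_internal z hz hzu hzv
      rw [hsb] at h1
      exact inCopyOne_of h1 h2
    · intro z hz hzu hzv
      obtain ⟨h1, h2⟩ := hq0_internal z hz hzu hzv
      rw [hsb] at h1
      exact inCopyTwo_of (by simpa using h1)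
    · ext z
      simp only [Set.mem_setOf_eq, Set.mem_union]
      exact hsupp_union z
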